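/- Let G(μ) = c₃μ³ + c₂μ² + c₁μ + c₀ have three distinct nonzero roots μ₁, μ₂, μ₃ with c₃ ≠ 0. Then for arbitrary constants K₁, K₂, K₃, the function v(μ) = b/c₃ + K₁√(μ−μ₁) + K₂√(μ−μ₂) + K₃√(μ−μ₃) satisfies the linear ODE 8G(μ)v''' + 12G'(μ)v'' + 6(3c₃μ + c₂)v' − 3c₃ v = −3b (i.e., the case a₁ = 0 of equation (e2r)), for μ in a region where all three square roots are defined. -/

import Mathlib

lemma sqrtD1 (a x : ℝ) (h : a < x) :
    HasDerivAt (fun μ => Real.sqrt (μ - a)) (1 / (2 * Real.sqrt (x - a))) x := by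
  have hx : x - a ≠ 0 := sub_ne_zero.mpr (ne_of_gt h)
  have := (Real.hasDerivAt_sqrt hx).comp x ((hasDerivAt_id x).sub_const a)
  simpa [Function.comp_def] using this

lemma sqrtD2 (a x : ℝ) (h : a < x) :
    HasDerivAt (fun μ => 1 / (2 * Real.sqrt (μ - a))) (-1 / (4 * Real.sqrt (x - a) ^ 3)) x := by
  have hs : 0 < Real.sqrt (x - a) := Real.sqrt_pos.2 (sub_pos.2 h)
  have h1 := ((sqrtD1 a x h).const_mul 2).inv (by positivity)
  have h2 : (fun μ => 2 * Real.sqrt (μ - a))⁻¹ = fun μ => 1 / (2 * Real.sqrt (μ - a)) := by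
    funext y; simp only [Pi.inv_apply, one_div]
  rw [h2] at h1
  refine h1.congr_deriv ?_
  have : Real.sqrt (x - a) ≠ 0 := ne_of_gt hs
  field_simp
  ring

lemma sqrtD3 (a x : ℝ) (h : a < x) :
    HasDerivAt (fun μ => -1 / (4 * Real.sqrt (μ - a) ^ 3)) (3 / (8 * Real.sqrt (x - a) ^ 5)) x := by
  have hs : 0 < Real.sqrt (x - a) := Real.sqrt_pos.2 (sub_pos.2 h)
  have h1 := ((((sqrtD1 a x h).pow 3).const_mul 4).inv (by simp only [Pi.pow_apply]; positivity)).neg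
  have h2 : -(fun y => 4 * ((fun μ => Real.sqrt (μ - a)) ^ 3) y)⁻¹ = fun μ => -1 / (4 * Real.sqrt (μ - a) ^ 3) := by
    funext y; simp only [Pi.neg_apply, Pi.inv_apply, Pi.pow_apply, neg_div, one_div]
  rw [h2] at h1
  refine h1.congr_deriv ?_
  have : Real.sqrt (x - a) ≠ 0 := ne_of_gt hs
  norm_num only [Pi.pow_apply]
  field_simp
  ring

theorem table1_case3_solution
    (b c₀ c₁ c₂ c₃ K₁ K₂ K₃ μ₁ μ₂ μ₃ : ℝ)
    (hc₃ : c₃ ≠ 0)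
    (h12 : μ₁ ≠ μ₂) (h23 : μ₂ ≠ μ₃) (h13 : μ₁ ≠ μ₃)
    (h1 : μ₁ ≠ 0) (h2 : μ₂ ≠ 0) (h3 : μ₃ ≠ 0)
    (hroots : ∀ x : ℝ, c₃ * x ^ 3 + c₂ * x ^ 2 + c₁ * x + c₀
      = c₃ * (x - μ₁) * (x - μ₂) * (x - μ₃))
    (v : ℝ → ℝ)
    (hv : ∀ μ : ℝ, v μ = b / c₃ + K₁ * Real.sqrt (μ - μ₁)
      + K₂ * Real.sqrt (μ - μ₂) + K₃ * Real.sqrt (μ - μ₃)) :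
    ∀ μ : ℝ, μ₁ < μ → μ₂ < μ → μ₃ < μ →
      8 * (c₃ * μ ^ 3 + c₂ * μ ^ 2 + c₁ * μ + c₀) * deriv (deriv (deriv v)) μ
        + 12 * (3 * c₃ * μ ^ 2 + 2 * c₂ * μ + c₁) * deriv (deriv v) μ
        + 6 * (3 * c₃ * μ + c₂) * deriv v μ
        - 3 * c₃ * v μ = -3 * b := by
  have hvfun : v = fun μ => b / c₃ + K₁ * Real.sqrt (μ - μ₁)
      + K₂ * Real.sqrt (μ - μ₂) + K₃ * Real.sqrt (μ - μ₃) := funext hv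
  -- first derivative on the region
  have hD1 : ∀ x : ℝ, μ₁ < x → μ₂ < x → μ₃ < x → HasDerivAt v
      (K₁ * (1 / (2 * Real.sqrt (x - μ₁))) + K₂ * (1 / (2 * Real.sqrt (x - μ₂)))
        + K₃ * (1 / (2 * Real.sqrt (x - μ₃)))) x := by
    intro x hx1 hx2 hx3
    rw [hvfun]
    have := (((hasDerivAt_const x (b / c₃)).add ((sqrtD1 μ₁ x hx1).const_mul K₁)).add
      ((sqrtD1 μ₂ x hx2).const_mul K₂)).add ((sqrtD1 μ₃ x hx3).const_mul K₃)
    refine this.congr_deriv ?_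
    ring
  have hdv : ∀ x : ℝ, μ₁ < x → μ₂ < x → μ₃ < x → deriv v x
      = K₁ * (1 / (2 * Real.sqrt (x - μ₁))) + K₂ * (1 / (2 * Real.sqrt (x - μ₂)))
        + K₃ * (1 / (2 * Real.sqrt (x - μ₃))) := fun x hx1 hx2 hx3 => (hD1 x hx1 hx2 hx3).deriv
  have hreg : ∀ x : ℝ, μ₁ < x → μ₂ < x → μ₃ < x →
      ∀ᶠ y in nhds x, μ₁ < y ∧ μ₂ < y ∧ μ₃ < y := by
    intro x hx1 hx2 hx3
    exact (eventually_gt_nhds hx1).and ((eventually_gt_nhds hx2).and (eventually_gt_nhds hx3))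
  have hD2 : ∀ x : ℝ, μ₁ < x → μ₂ < x → μ₃ < x →
      deriv (deriv v) x = K₁ * (-1 / (4 * Real.sqrt (x - μ₁) ^ 3))
        + K₂ * (-1 / (4 * Real.sqrt (x - μ₂) ^ 3)) + K₃ * (-1 / (4 * Real.sqrt (x - μ₃) ^ 3)) := by
    intro x hx1 hx2 hx3
    have hev : deriv v =ᶠ[nhds x] fun y => K₁ * (1 / (2 * Real.sqrt (y - μ₁)))
        + K₂ * (1 / (2 * Real.sqrt (y - μ₂))) + K₃ * (1 / (2 * Real.sqrt (y - μ₃))) :=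
      (hreg x hx1 hx2 hx3).mono (fun y hy => hdv y hy.1 hy.2.1 hy.2.2)
    rw [hev.deriv_eq]
    exact ((((sqrtD2 μ₁ x hx1).const_mul K₁).add ((sqrtD2 μ₂ x hx2).const_mul K₂)).add
      ((sqrtD2 μ₃ x hx3).const_mul K₃)).deriv
  intro μ hμ1 hμ2 hμ3
  have hD3 : deriv (deriv (deriv v)) μ = K₁ * (3 / (8 * Real.sqrt (μ - μ₁) ^ 5))
      + K₂ * (3 / (8 * Real.sqrt (μ - μ₂) ^ 5)) + K₃ * (3 / (8 * Real.sqrt (μ - μ₃) ^ 5)) := by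
    have hev : deriv (deriv v) =ᶠ[nhds μ] fun y => K₁ * (-1 / (4 * Real.sqrt (y - μ₁) ^ 3))
        + K₂ * (-1 / (4 * Real.sqrt (y - μ₂) ^ 3)) + K₃ * (-1 / (4 * Real.sqrt (y - μ₃) ^ 3)) :=
      (hreg μ hμ1 hμ2 hμ3).mono (fun y hy => hD2 y hy.1 hy.2.1 hy.2.2)
    rw [hev.deriv_eq]
    exact ((((sqrtD3 μ₁ μ hμ1).const_mul K₁).add ((sqrtD3 μ₂ μ hμ2).const_mul K₂)).add
      ((sqrtD3 μ₃ μ hμ3).const_mul K₃)).deriv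
  rw [hD3, hD2 μ hμ1 hμ2 hμ3, hdv μ hμ1 hμ2 hμ3, hv μ]
  -- coefficient identities
  have e0 := hroots 0
  have e1 := hroots 1
  have em := hroots (-1)
  have hc0 : c₀ = -(c₃ * (μ₁ * μ₂ * μ₃)) := by linear_combination e0
  have hc1 : c₁ = c₃ * (μ₁ * μ₂ + μ₂ * μ₃ + μ₁ * μ₃) := by linear_combination e1 / 2 - em / 2
  have hc2 : c₂ = -(c₃ * (μ₁ + μ₂ + μ₃)) := by linear_combination e1 / 2 + em / 2 - e0
  subst hc0 hc1 hc2
  -- replace square roots by variables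
  obtain ⟨s₁, hs₁e, hs₁p, hs₁q⟩ : ∃ s, Real.sqrt (μ - μ₁) = s ∧ 0 < s ∧ μ₁ = μ - s ^ 2 :=
    ⟨_, rfl, Real.sqrt_pos.2 (by linarith), by
      rw [Real.sq_sqrt (by linarith : (0:ℝ) ≤ μ - μ₁)]; ring⟩
  obtain ⟨s₂, hs₂e, hs₂p, hs₂q⟩ : ∃ s, Real.sqrt (μ - μ₂) = s ∧ 0 < s ∧ μ₂ = μ - s ^ 2 :=
    ⟨_, rfl, Real.sqrt_pos.2 (by linarith), by
      rw [Real.sq_sqrt (by linarith : (0:ℝ) ≤ μ - μ₂)]; ring⟩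
  obtain ⟨s₃, hs₃e, hs₃p, hs₃q⟩ : ∃ s, Real.sqrt (μ - μ₃) = s ∧ 0 < s ∧ μ₃ = μ - s ^ 2 :=
    ⟨_, rfl, Real.sqrt_pos.2 (by linarith), by
      rw [Real.sq_sqrt (by linarith : (0:ℝ) ≤ μ - μ₃)]; ring⟩
  rw [hs₁e, hs₂e, hs₃e]
  subst hs₁q hs₂q hs₃q
  have n1 : s₁ ≠ 0 := ne_of_gt hs₁p
  have n2 : s₂ ≠ 0 := ne_of_gt hs₂p
  have n3 : s₃ ≠ 0 := ne_of_gt hs₃p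
  field_simp
  ring
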